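/- Let Q ∈ ℝ^{m_r×d} satisfy ‖Qᵀe_p‖_{ℓ2} ≤ ν√(d/m_r) for every 1 ≤ p ≤ m_r. Let E ∈ ℝ^{m_r×n_r} have at most α_r·m_r nonzero entries in each column, and suppose ‖E‖_{ℓ∞} ≤ s₀·σ*_r·qᵏ/√(m_r n_r). Then for every column index l ∈ {1,…,n_r}: ‖QᵀE e_l‖_{ℓ2} ≤ α_r·ν·√d·s₀·σ*_r·qᵏ/√(n_r). -/

import Mathlib

open Matrix
open scoped BigOperators

noncomputable def l2 {n : ℕ} (v : Fin n → ℝ) : ℝ := Real.sqrt (∑ i, v i ^ 2)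

noncomputable def vinf {n : ℕ} (v : Fin n → ℝ) : ℝ := ⨆ i, |v i|

noncomputable def linf {m n : ℕ} (X : Matrix (Fin m) (Fin n) ℝ) : ℝ := ⨆ i, ⨆ j, |X i j|

noncomputable def frob {m n : ℕ} (X : Matrix (Fin m) (Fin n) ℝ) : ℝ :=
  Real.sqrt (∑ i, ∑ j, X i j ^ 2)

noncomputable def spec {m n : ℕ} (X : Matrix (Fin m) (Fin n) ℝ) : ℝ :=
  ‖LinearMap.toContinuousLinearMap (Matrix.toEuclideanLin X)‖

def supp {m n : ℕ} (X : Matrix (Fin m) (Fin n) ℝ) : Set (Fin m × Fin n) :=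
  {p | X p.1 p.2 ≠ 0}

noncomputable def sthr {m n : ℕ} (ζ : ℝ) (X : Matrix (Fin m) (Fin n) ℝ) :
    Matrix (Fin m) (Fin n) ℝ :=
  Matrix.of fun i j => Real.sign (X i j) * max (|X i j| - ζ) 0

lemma l2_eq_norm {n : ℕ} (v : Fin n → ℝ) :
    l2 v = ‖(WithLp.equiv 2 (Fin n → ℝ)).symm v‖ := by
  simp [l2, EuclideanSpace.norm_eq, Real.norm_eq_abs, sq_abs]

lemma l2_sum_le {ι : Type*} {n : ℕ} (S : Finset ι) (g : ι → Fin n → ℝ) :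
    l2 (∑ i ∈ S, g i) ≤ ∑ i ∈ S, l2 (g i) := by
  rw [l2_eq_norm]
  have : (WithLp.equiv 2 (Fin n → ℝ)).symm (∑ i ∈ S, g i)
      = ∑ i ∈ S, (WithLp.equiv 2 (Fin n → ℝ)).symm (g i) := WithLp.toLp_sum 2 (s := S) (f := g)
  rw [this]
  refine (norm_sum_le _ _).trans ?_
  exact Finset.sum_le_sum fun i _ => le_of_eq (l2_eq_norm _).symm

lemma l2_smul {n : ℕ} (c : ℝ) (v : Fin n → ℝ) : l2 (c • v) = |c| * l2 v := by
  rw [l2_eq_norm, l2_eq_norm]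
  have : (WithLp.equiv 2 (Fin n → ℝ)).symm (c • v)
      = c • (WithLp.equiv 2 (Fin n → ℝ)).symm v := rfl
  rw [this, norm_smul, Real.norm_eq_abs]

/-- Lemma 6 of the paper: regional column bound
`‖QᵀE e_l‖_{ℓ2} ≤ α_r·ν·√d·s₀·σ*_r·qᵏ/√(n_r)`. -/
theorem stmt6 (mr nr d : ℕ) (k : ℕ) (hm : 0 < mr) (hn : 0 < nr) (hd : 0 < d)
    (ν αr s₀ σr q : ℝ) (hν : 0 < ν) (hαr : 0 < αr) (hs₀ : 0 < s₀)
    (hσr : 0 < σr) (hq : 0 < q)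
    (Q : Matrix (Fin mr) (Fin d) ℝ) (E : Matrix (Fin mr) (Fin nr) ℝ)
    (hQ : ∀ p : Fin mr, l2 (Qᵀ *ᵥ Pi.single p 1) ≤ ν * Real.sqrt ((d : ℝ) / mr))
    (hcol : ∀ j : Fin nr,
      ((Finset.univ.filter fun i => E i j ≠ 0).card : ℝ) ≤ αr * mr)
    (hE : linf E ≤ s₀ * σr * q ^ k / Real.sqrt ((mr : ℝ) * nr)) :
    ∀ l : Fin nr,
      l2 (Qᵀ *ᵥ fun i => E i l) ≤ αr * ν * Real.sqrt d * s₀ * σr * q ^ k / Real.sqrt nr := by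
  intro l
  have hE : ⨆ i, ⨆ j, |E i j| ≤ s₀ * σr * q ^ k / Real.sqrt ((mr : ℝ) * nr) := hE
  set S := Finset.univ.filter (fun i => E i l ≠ 0) with hS
  set M := s₀ * σr * q ^ k / Real.sqrt ((mr : ℝ) * nr) with hM
  set B := ν * Real.sqrt ((d : ℝ) / mr) with hB
  have hEentry : ∀ i j, |E i j| ≤ M := by
    intro i j
    have h1 : |E i j| ≤ ⨆ j', |E i j'| :=
      le_ciSup (Set.Finite.bddAbove (Set.finite_range fun j' => |E i j'|)) j
    have h2 : (⨆ j', |E i j'|) ≤ ⨆ i', ⨆ j', |E i' j'| :=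
      le_ciSup (Set.Finite.bddAbove (Set.finite_range fun i' => ⨆ j', |E i' j'|)) i
    exact h1.trans (h2.trans hE)
  have hvec : (fun i => E i l) = ∑ p ∈ S, E p l • (Pi.single p 1 : Fin mr → ℝ) := by
    funext i
    simp only [Finset.sum_apply, Pi.smul_apply, smul_eq_mul]
    rw [Finset.sum_eq_single i]
    · by_cases h : E i l = 0
      · simp [h]
      · simp
    · intro b _ hb; simp [Pi.single_eq_of_ne (Ne.symm hb)]
    · intro hi
      have h0 : E i l = 0 := by
        by_contra h
        exact hi (by simp [hS, h])
      simp [h0]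
  have hmv : Qᵀ *ᵥ (fun i => E i l) = ∑ p ∈ S, E p l • (Qᵀ *ᵥ Pi.single p 1) := by
    rw [hvec]
    simp only [← Matrix.mulVecLin_apply, map_sum, _root_.map_smul]
  rw [hmv]
  calc l2 (∑ p ∈ S, E p l • (Qᵀ *ᵥ Pi.single p 1))
      ≤ ∑ p ∈ S, l2 (E p l • (Qᵀ *ᵥ Pi.single p 1)) := l2_sum_le _ _
    _ = ∑ p ∈ S, |E p l| * l2 (Qᵀ *ᵥ Pi.single p 1) := by
        simp_rw [l2_smul]
    _ ≤ ∑ p ∈ S, M * B := by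
        refine Finset.sum_le_sum fun p _ => ?_
        have h1 := hEentry p l
        have h2 := hQ p
        have hM0 : 0 ≤ M := le_trans (abs_nonneg _) h1
        have hl0 : 0 ≤ l2 (Qᵀ *ᵥ Pi.single p 1) := Real.sqrt_nonneg _
        exact mul_le_mul h1 h2 hl0 hM0
    _ = S.card * (M * B) := by rw [Finset.sum_const, nsmul_eq_mul]
    _ ≤ αr * mr * (M * B) := by
        have hMB : 0 ≤ M * B := by
          have h0 : 0 ≤ M := le_trans (abs_nonneg _) (hEentry ⟨0, hm⟩ l)
          have h1 : 0 ≤ B := by rw [hB]; positivity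
          exact mul_nonneg h0 h1
        exact mul_le_mul_of_nonneg_right (hcol l) hMB
    _ = αr * ν * Real.sqrt d * s₀ * σr * q ^ k / Real.sqrt nr := by
        rw [hM, hB, Real.sqrt_mul (by positivity), Real.sqrt_div (by positivity)]
        have hsm : Real.sqrt mr * Real.sqrt mr = (mr : ℝ) :=
          Real.mul_self_sqrt (by positivity)
        have hsm' : (0:ℝ) < Real.sqrt mr := Real.sqrt_pos.2 (by positivity)
        have hsn' : (0:ℝ) < Real.sqrt nr := Real.sqrt_pos.2 (by positivity)
        field_simp
        linear_combination (-1 : ℝ) * hsm
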